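/- Let H be a real Hilbert space, w_1, …, w_n ∈ H with Gram matrix k (k_{ij} = ⟨w_i, w_j⟩), let Ĉ_XX be the empirical covariance operator associated with w_1, …, w_n, and let ε > 0. Then the matrix k + nε·I_n is invertible, the operator Ĉ_XX + ε·Id is bijective on H, and for every c ∈ ℝ^n one has (Ĉ_XX + ε·Id)^{-1}(Σ_{j=1}^n c_j w_j) = Σ_{j=1}^n d_j w_j, where d = n (k + nε·I_n)^{-1} c. -/

import Mathlib

open scoped RealInnerProductSpace BigOperators
open Matrix

/-- With Gram matrix `k` of `w₁, …, wₙ` and `ε > 0`, the matrix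
`k + nε Iₙ` is invertible, the regularized empirical covariance operator
`Ĉ_XX + ε Id` is bijective on `H`, and its inverse maps `Σⱼ cⱼ wⱼ` to `Σⱼ dⱼ wⱼ`
with `d = n (k + nε Iₙ)⁻¹ c`. -/
theorem regularized_covariance_inverse_on_span
    {H : Type*} [NormedAddCommGroup H] [InnerProductSpace ℝ H]
    (n : ℕ) (hn : 0 < n) (w : Fin n → H)
    (k : Matrix (Fin n) (Fin n) ℝ) (hk : ∀ i j, k i j = ⟪w i, w j⟫)
    (ε : ℝ) (hε : 0 < ε)
    (C : H → H)
    (hC : ∀ φ : H, C φ = (1 / (n : ℝ)) • ∑ p, ⟪w p, φ⟫ • w p) :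
    IsUnit (k + ((n : ℝ) * ε) • (1 : Matrix (Fin n) (Fin n) ℝ)) ∧
    Function.Bijective (fun φ : H => C φ + ε • φ) ∧
    ∀ c : Fin n → ℝ,
      (fun φ : H => C φ + ε • φ)
          (∑ j, ((n : ℝ) * (k + ((n : ℝ) * ε) • 1)⁻¹.mulVec c j) • w j)
        = ∑ j, c j • w j := by
  have hn' : (n : ℝ) ≠ 0 := Nat.cast_ne_zero.mpr hn.ne'
  set A := k + ((n : ℝ) * ε) • (1 : Matrix (Fin n) (Fin n) ℝ) with hAdef
  -- quadratic form of k
  have hkquad : ∀ x : Fin n → ℝ, x ⬝ᵥ k *ᵥ x = ⟪∑ i, x i • w i, ∑ j, x j • w j⟫ := by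
    intro x
    simp only [dotProduct, Matrix.mulVec, hk, sum_inner, inner_sum,
      real_inner_smul_left, real_inner_smul_right]
    refine Finset.sum_congr rfl fun i _ => ?_
    rw [Finset.mul_sum]
    refine Finset.sum_congr rfl fun j _ => ?_
    rw [real_inner_comm (w j) (w i)]; ring
  have hApos : A.PosDef := by
    refine Matrix.PosDef.of_dotProduct_mulVec_pos ?_ ?_
    · ext i j
      simp only [hAdef, Matrix.conjTranspose_apply, Matrix.add_apply, Matrix.smul_apply,
        Matrix.one_apply, star_trivial, hk, smul_eq_mul]
      rw [real_inner_comm]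
      by_cases h : i = j <;> simp [h, eq_comm]
    · intro x hx
      simp only [star_trivial, hAdef, Matrix.add_mulVec, Matrix.smul_mulVec,
        Matrix.one_mulVec, dotProduct_add, dotProduct_smul, smul_eq_mul]
      have h1 : (0:ℝ) ≤ x ⬝ᵥ k *ᵥ x := by rw [hkquad]; exact real_inner_self_nonneg
      have h2 : (0:ℝ) < x ⬝ᵥ x := by
        obtain ⟨i, hi⟩ := Function.ne_iff.mp hx
        exact Finset.sum_pos' (fun j _ => mul_self_nonneg _)
          ⟨i, Finset.mem_univ i, mul_self_pos.mpr hi⟩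
      have : (0:ℝ) < (n : ℝ) * ε * (x ⬝ᵥ x) := by positivity
      linarith
  have hdet : IsUnit A.det := (Matrix.isUnit_iff_isUnit_det A).mp hApos.isUnit
  -- key computation
  have key : ∀ c : Fin n → ℝ,
      C (∑ j, ((n : ℝ) * A⁻¹.mulVec c j) • w j)
        + ε • ∑ j, ((n : ℝ) * A⁻¹.mulVec c j) • w j = ∑ j, c j • w j := by
    intro c
    set d : Fin n → ℝ := fun j => (n : ℝ) * A⁻¹.mulVec c j with hd
    have hAd : A *ᵥ d = (n : ℝ) • c := by
      have : d = (n : ℝ) • A⁻¹ *ᵥ c := by ext j; simp [hd]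
      rw [this, Matrix.mulVec_smul, Matrix.mulVec_mulVec, Matrix.mul_nonsing_inv _ hdet,
        Matrix.one_mulVec]
    have hcoef : ∀ p, (1 / (n : ℝ)) * (k *ᵥ d) p + ε * d p = c p := by
      intro p
      have h1 : (k *ᵥ d) p + ((n : ℝ) * ε) * d p = (n : ℝ) * c p := by
        have := congrFun hAd p
        simpa [hAdef, Matrix.add_mulVec, Matrix.smul_mulVec, Matrix.one_mulVec] using this
      field_simp
      linarith
    rw [hC]
    have hCw : ∀ p : Fin n, ⟪w p, ∑ j, d j • w j⟫ = (k *ᵥ d) p := by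
      intro p
      simp [inner_sum, real_inner_smul_right, Matrix.mulVec, dotProduct, hk, mul_comm]
    calc (1 / (n : ℝ)) • ∑ p, ⟪w p, ∑ j, d j • w j⟫ • w p + ε • ∑ j, d j • w j
        = ∑ p, ((1 / (n : ℝ)) * (k *ᵥ d) p + ε * d p) • w p := by
          rw [Finset.smul_sum, Finset.smul_sum, ← Finset.sum_add_distrib]
          refine Finset.sum_congr rfl fun p _ => ?_
          rw [hCw, add_smul, smul_smul, smul_smul]
      _ = ∑ p, c p • w p := by
          refine Finset.sum_congr rfl fun p _ => ?_
          rw [hcoef]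
  -- C is "linear" as far as we need
  have hTinj : Function.Injective (fun φ : H => C φ + ε • φ) := by
    intro φ₁ φ₂ h
    simp only at h
    set δ := φ₁ - φ₂ with hδ
    have h0 : (1 / (n : ℝ)) • ∑ p, ⟪w p, δ⟫ • w p + ε • δ = 0 := by
      rw [hC, hC] at h
      have : ((1 / (n : ℝ)) • ∑ p, ⟪w p, φ₁⟫ • w p + ε • φ₁)
           - ((1 / (n : ℝ)) • ∑ p, ⟪w p, φ₂⟫ • w p + ε • φ₂) = 0 := by
        rw [h]; abel
      rw [← this]
      simp only [hδ, inner_sub_right, sub_smul, smul_sub, Finset.sum_sub_distrib]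
      abel
    have hinner : (1 / (n : ℝ)) * (∑ p, ⟪w p, δ⟫ ^ 2) + ε * ⟪δ, δ⟫ = 0 := by
      have := congrArg (fun v => ⟪v, δ⟫) h0
      simpa [inner_add_left, real_inner_smul_left, sum_inner, sq] using this
    have h1 : (0:ℝ) ≤ ∑ p, ⟪w p, δ⟫ ^ 2 := Finset.sum_nonneg fun p _ => sq_nonneg _
    have h2 : (0:ℝ) ≤ ⟪δ, δ⟫ := real_inner_self_nonneg
    have hδ0 : ⟪δ, δ⟫ = 0 := by
      have hn0 : (0:ℝ) < 1 / (n:ℝ) := by positivity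
      nlinarith
    have : δ = 0 := by
      rwa [real_inner_self_eq_norm_sq, pow_eq_zero_iff (by norm_num), norm_eq_zero] at hδ0
    exact sub_eq_zero.mp this
  refine ⟨hApos.isUnit, ⟨hTinj, ?_⟩, fun c => key c⟩
  -- surjectivity
  intro ψ
  set c : Fin n → ℝ := fun p => -(ε⁻¹ * (1 / (n : ℝ)) * ⟪w p, ψ⟫) with hc
  refine ⟨ε⁻¹ • ψ + ∑ j, ((n : ℝ) * A⁻¹.mulVec c j) • w j, ?_⟩
  simp only
  have hCadd : C (ε⁻¹ • ψ + ∑ j, ((n : ℝ) * A⁻¹.mulVec c j) • w j)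
      = C (ε⁻¹ • ψ) + C (∑ j, ((n : ℝ) * A⁻¹.mulVec c j) • w j) := by
    simp only [hC, inner_add_right, add_smul, Finset.sum_add_distrib, smul_add]
  rw [hCadd, smul_add]
  have : C (∑ j, ((n : ℝ) * A⁻¹.mulVec c j) • w j)
      + ε • ∑ j, ((n : ℝ) * A⁻¹.mulVec c j) • w j = ∑ j, c j • w j := key c
  have hsum : ∑ j, c j • w j = -(ε⁻¹ • C ψ) := by
    rw [hC]
    simp only [hc, neg_smul, Finset.smul_sum, smul_smul, ← Finset.sum_neg_distrib]
    refine Finset.sum_congr rfl fun p _ => ?_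
    ring_nf
  have hCψ : C (ε⁻¹ • ψ) = ε⁻¹ • C ψ := by
    simp only [hC, real_inner_smul_right, Finset.smul_sum, smul_smul]
    refine Finset.sum_congr rfl fun p _ => ?_
    congr 1; ring
  have hεψ : ε • (ε⁻¹ • ψ) = ψ := by
    rw [smul_smul, mul_inv_cancel₀ hε.ne', one_smul]
  calc C (ε⁻¹ • ψ) + C (∑ j, ((n : ℝ) * A⁻¹.mulVec c j) • w j)
        + (ε • (ε⁻¹ • ψ) + ε • ∑ j, ((n : ℝ) * A⁻¹.mulVec c j) • w j)
      = ε⁻¹ • C ψ + (C (∑ j, ((n : ℝ) * A⁻¹.mulVec c j) • w j)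
          + ε • ∑ j, ((n : ℝ) * A⁻¹.mulVec c j) • w j) + ψ := by
        rw [hCψ, hεψ]; abel
    _ = ψ := by rw [this, hsum]; abel
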